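/- Let n ≥ 2, let d_1*, …, d_n* be pairwise distinct reals in [−d, d] with minimal gap d_min* and a_1*, …, a_n* real with |a_j*| ≥ m > 0. Let D be the ((s−1)/2 + 1)×n matrix with entries (d_j*)^(i−1) for an odd integer s ≥ 2n+1, and let A = diag(a_1*, …, a_n*). Then the n-th largest singular value σ_n of D·A·Dᵀ satisfies σ_n ≥ m·ζ(n)²·(d_min*)^(2n−2) / (n·(1+d)^(2n−2)), where ζ(n) = (n/2)!·((n−2)/2)! for even n and (((n−1)/2)!)² for odd n. -/

import Mathlib

open Matrix

/-- ζ(n) = (n/2)!·((n-2)/2)! for even n and (((n-1)/2)!)² for odd n. -/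
noncomputable def paperZeta (n : ℕ) : ℝ :=
  if Even n then (Nat.factorial (n / 2) : ℝ) * (Nat.factorial ((n - 2) / 2) : ℝ)
  else ((Nat.factorial ((n - 1) / 2) : ℝ)) ^ 2

/-- The `((s-1)/2 + 1) × n` Vandermonde matrix `D` with entries `(d*_j)^(i-1)`. -/
noncomputable def vandD (s n : ℕ) (dstar : Fin n → ℝ) :
    Matrix (Fin ((s - 1) / 2 + 1)) (Fin n) ℝ :=
  Matrix.of fun i j => dstar j ^ (i : ℕ)

section
open Polynomial Finset

lemma middle_factorial (N p q : ℕ) (h : p + q = N) :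
    (N/2).factorial * (N - N/2).factorial ≤ p.factorial * q.factorial := by
  have hp : p ≤ N := by omega
  have h1 := Nat.choose_mul_factorial_mul_factorial hp
  have h2 := Nat.choose_mul_factorial_mul_factorial (Nat.div_le_self N 2)
  have h3 := Nat.choose_le_middle p N
  have hpos : 0 < N.choose (N/2) := Nat.choose_pos (Nat.div_le_self N 2)
  have hq : N - p = q := by omega
  rw [hq] at h1
  refine Nat.le_of_mul_le_mul_left ?_ hpos
  calc N.choose (N/2) * ((N/2).factorial * (N - N/2).factorial)
      = N.factorial := by rw [← h2]; ring
    _ = N.choose p * (p.factorial * q.factorial) := by rw [← h1]; ring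
    _ ≤ N.choose (N/2) * (p.factorial * q.factorial) :=
        Nat.mul_le_mul_right _ h3

lemma sep_max (m : ℝ) (hm : 0 < m) : ∀ (k : ℕ) (S : Finset ℝ), S.card = k →
    ∀ (hS : S.Nonempty), (∀ x ∈ S, m ≤ x) →
    (∀ x ∈ S, ∀ y ∈ S, x ≠ y → m ≤ |x - y|) → (k : ℝ) * m ≤ S.max' hS := by
  intro k
  induction k with
  | zero => intro S hc hS _ _; exact absurd (Finset.card_eq_zero.mp hc) hS.ne_empty
  | succ k ih =>
    intro S hc hS hlow hsep
    have hmax := S.max'_mem hS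
    rcases Nat.eq_zero_or_pos k with hk | hk
    · simpa [hk] using hlow _ hmax
    · set M := S.max' hS with hM
      have hS' : (S.erase M).Nonempty := by
        rw [← Finset.card_pos, Finset.card_erase_of_mem hmax, hc]; omega
      have hc' : (S.erase M).card = k := by rw [Finset.card_erase_of_mem hmax, hc]; omega
      have ih' := ih (S.erase M) hc' hS' (fun x hx => hlow x (Finset.mem_of_mem_erase hx))
        (fun x hx y hy hxy => hsep x (Finset.mem_of_mem_erase hx) y (Finset.mem_of_mem_erase hy) hxy)
      set M' := (S.erase M).max' hS' with hM'
      have hM'mem := (S.erase M).max'_mem hS'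
      have hne : M' ≠ M := (Finset.mem_erase.mp hM'mem).1
      have hle : M' ≤ M := S.le_max' _ (Finset.mem_of_mem_erase hM'mem)
      have hsepMM := hsep M' (Finset.mem_of_mem_erase hM'mem) M hmax hne
      have : m ≤ M - M' := by rw [abs_sub_comm] at hsepMM; rwa [abs_of_nonneg (by linarith)] at hsepMM
      push_cast
      linarith

lemma sep_prod (m : ℝ) (hm : 0 < m) : ∀ (k : ℕ) (S : Finset ℝ), S.card = k →
    (∀ x ∈ S, m ≤ x) →
    (∀ x ∈ S, ∀ y ∈ S, x ≠ y → m ≤ |x - y|) →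
    (k.factorial : ℝ) * m ^ k ≤ ∏ x ∈ S, x := by
  intro k
  induction k with
  | zero => intro S hc _ _; simp [Finset.card_eq_zero.mp hc]
  | succ k ih =>
    intro S hc hlow hsep
    have hS : S.Nonempty := by rw [← Finset.card_pos, hc]; omega
    have hmax := S.max'_mem hS
    set M := S.max' hS with hM
    have hc' : (S.erase M).card = k := by rw [Finset.card_erase_of_mem hmax, hc]; omega
    have ih' := ih (S.erase M) hc' (fun x hx => hlow x (Finset.mem_of_mem_erase hx))
      (fun x hx y hy hxy => hsep x (Finset.mem_of_mem_erase hx) y (Finset.mem_of_mem_erase hy) hxy)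
    have hMge : ((k:ℝ) + 1) * m ≤ M := by
      have := sep_max m hm (k+1) S hc hS hlow hsep
      push_cast at this ⊢; linarith
    rw [← Finset.mul_prod_erase S _ hmax]
    have hfac : (Nat.factorial (k+1) : ℝ) * m ^ (k+1) = (((k:ℝ)+1) * m) * ((k.factorial : ℝ) * m ^ k) := by
      rw [Nat.factorial_succ]; push_cast; ring
    rw [hfac]
    have h1 : 0 ≤ ((k:ℝ)+1) * m := by positivity
    have h2 : (0:ℝ) ≤ (k.factorial : ℝ) * m ^ k := by positivity
    exact mul_le_mul hMge ih' h2 (le_trans h1 hMge)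


lemma paperZeta_eq (n : ℕ) (hn : 2 ≤ n) :
    paperZeta n = (Nat.factorial ((n-1)/2) : ℝ) * (Nat.factorial ((n-1) - (n-1)/2) : ℝ) := by
  unfold paperZeta
  rcases Nat.even_or_odd n with he | ho
  · rw [if_pos he]
    obtain ⟨k, hk⟩ := he
    have h1 : n / 2 = k := by omega
    have h2 : (n - 2) / 2 = k - 1 := by omega
    have h3 : (n - 1) / 2 = k - 1 := by omega
    have h4 : (n - 1) - (n - 1)/2 = k := by omega
    rw [h1, h2, h4, h3, mul_comm]
  · rw [if_neg (Nat.not_even_iff_odd.mpr ho)]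
    obtain ⟨k, hk⟩ := ho
    have h3 : (n - 1) / 2 = k := by omega
    have h4 : (n - 1) - (n - 1)/2 = k := by omega
    rw [h4, h3, sq]

lemma abs_coeff_sum {ι : Type*} [DecidableEq ι] (f : ι → ℝ) (t : Finset ι) :
    ∑ i ∈ Finset.range (t.card + 1), |(∏ a ∈ t, (X - C (f a))).coeff i| ≤
      ∏ a ∈ t, (1 + |f a|) := by
  induction t using Finset.induction_on with
  | empty => simp
  | insert a u ha ih =>
    rw [Finset.prod_insert ha, Finset.prod_insert ha, Finset.card_insert_of_notMem ha]
    set Q : Polynomial ℝ := ∏ b ∈ u, (X - C (f b)) with hQ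
    set b := f a with hb
    have hdeg : Q.natDegree ≤ u.card := by
      refine le_trans (Polynomial.natDegree_prod_le _ _) ?_
      simp [natDegree_X_sub_C]
    have hcoeff : ∀ i : ℕ, ((X - C b) * Q).coeff (i+1) = Q.coeff i - b * Q.coeff (i+1) := by
      intro i
      rw [sub_mul, Polynomial.coeff_sub, Polynomial.coeff_X_mul, Polynomial.coeff_C_mul]
    have hcoeff0 : ((X - C b) * Q).coeff 0 = - (b * Q.coeff 0) := by
      rw [Polynomial.mul_coeff_zero]
      simp
    rw [Finset.sum_range_succ']
    have hQtop : Q.coeff (u.card + 1) = 0 :=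
      Polynomial.coeff_eq_zero_of_natDegree_lt (by omega)
    set S := ∑ i ∈ Finset.range (u.card + 1), |Q.coeff i| with hS
    have key1 : ∑ i ∈ Finset.range (u.card + 1), |((X - C b) * Q).coeff (i+1)| ≤
        S + |b| * (S - |Q.coeff 0|) := by
      have hshift : ∑ i ∈ Finset.range (u.card + 1), |Q.coeff (i+1)| = S - |Q.coeff 0| := by
        have := Finset.sum_range_succ' (fun i => |Q.coeff i|) (u.card + 1)
        have h2 : ∑ i ∈ Finset.range (u.card + 1 + 1), |Q.coeff i|
            = S + |Q.coeff (u.card + 1)| := Finset.sum_range_succ _ _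
        rw [h2, hQtop] at this
        simp at this
        linarith
      calc ∑ i ∈ Finset.range (u.card + 1), |((X - C b) * Q).coeff (i+1)|
          ≤ ∑ i ∈ Finset.range (u.card + 1), (|Q.coeff i| + |b| * |Q.coeff (i+1)|) := by
            refine Finset.sum_le_sum fun i _ => ?_
            rw [hcoeff i]
            refine le_trans (abs_sub _ _) ?_
            rw [abs_mul]
        _ = S + |b| * (S - |Q.coeff 0|) := by
            rw [Finset.sum_add_distrib, ← Finset.mul_sum, hshift]
    have key0 : |((X - C b) * Q).coeff 0| = |b| * |Q.coeff 0| := by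
      rw [hcoeff0, abs_neg, abs_mul]
    have hSnn : 0 ≤ |Q.coeff 0| := abs_nonneg _
    have hfin : S + |b| * (S - |Q.coeff 0|) + |b| * |Q.coeff 0| = (1 + |b|) * S := by ring
    have : ∑ i ∈ Finset.range (u.card + 1), |((X - C b) * Q).coeff (i+1)| + |((X - C b) * Q).coeff 0|
        ≤ (1 + |b|) * S := by rw [key0, ← hfin]; linarith
    refine le_trans this ?_
    have h1b : (0:ℝ) ≤ 1 + |b| := by positivity
    exact mul_le_mul_of_nonneg_left ih h1b


lemma prod_gaps (n : ℕ) (hn : 2 ≤ n) (dstar : Fin n → ℝ)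
    (hdist : Function.Injective dstar) (dmin : ℝ) (hpos : 0 < dmin)
    (hlb : ∀ i j : Fin n, i ≠ j → dmin ≤ |dstar i - dstar j|) (k : Fin n) :
    paperZeta n * dmin ^ (n-1) ≤ ∏ i ∈ Finset.univ.erase k, |dstar k - dstar i| := by
  classical
  set B := (Finset.univ.erase k).filter (fun i => dstar i < dstar k) with hB
  set A := (Finset.univ.erase k).filter (fun i => ¬ dstar i < dstar k) with hA
  have hsplit : (∏ i ∈ B, |dstar k - dstar i|) * (∏ i ∈ A, |dstar k - dstar i|)
      = ∏ i ∈ Finset.univ.erase k, |dstar k - dstar i| :=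
    Finset.prod_filter_mul_prod_filter_not _ _ _
  -- B part
  have hBprod : (B.card.factorial : ℝ) * dmin ^ B.card ≤ ∏ i ∈ B, |dstar k - dstar i| := by
    have hinj : ∀ x ∈ B, ∀ y ∈ B, dstar k - dstar x = dstar k - dstar y → x = y := by
      intro x _ y _ h; exact hdist (by linarith)
    have himg : ∏ v ∈ B.image (fun i => dstar k - dstar i), v
        = ∏ i ∈ B, (dstar k - dstar i) := Finset.prod_image hinj
    have hcard : (B.image (fun i => dstar k - dstar i)).card = B.card :=
      Finset.card_image_of_injOn hinj
    have hmem : ∀ i ∈ B, dstar i < dstar k := by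
      intro i hi; exact (Finset.mem_filter.mp hi).2
    have habs : ∏ i ∈ B, |dstar k - dstar i| = ∏ i ∈ B, (dstar k - dstar i) := by
      refine Finset.prod_congr rfl fun i hi => abs_of_pos (by have := hmem i hi; linarith)
    rw [habs, ← himg]
    refine sep_prod dmin hpos _ _ hcard ?_ ?_
    · intro v hv
      obtain ⟨i, hi, rfl⟩ := Finset.mem_image.mp hv
      have hik : i ≠ k := (Finset.mem_erase.mp (Finset.mem_filter.mp hi).1).1
      have := hlb k i (Ne.symm hik)
      rwa [abs_of_pos (by have := hmem i hi; linarith)] at this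
    · intro v hv w hw hvw
      obtain ⟨i, hi, rfl⟩ := Finset.mem_image.mp hv
      obtain ⟨j, hj, rfl⟩ := Finset.mem_image.mp hw
      have hij : i ≠ j := fun h => hvw (by rw [h])
      have := hlb j i (Ne.symm hij)
      have heq : dstar k - dstar i - (dstar k - dstar j) = dstar j - dstar i := by ring
      rwa [heq]
  -- A part
  have hAprod : (A.card.factorial : ℝ) * dmin ^ A.card ≤ ∏ i ∈ A, |dstar k - dstar i| := by
    have hmem : ∀ i ∈ A, dstar k < dstar i := by
      intro i hi
      have h1 := (Finset.mem_filter.mp hi).2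
      have hik : i ≠ k := (Finset.mem_erase.mp (Finset.mem_filter.mp hi).1).1
      have : dstar i ≠ dstar k := fun h => hik (hdist h)
      push_neg at h1
      exact lt_of_le_of_ne h1 (Ne.symm this)
    have hinj : ∀ x ∈ A, ∀ y ∈ A, dstar x - dstar k = dstar y - dstar k → x = y := by
      intro x _ y _ h; exact hdist (by linarith)
    have himg : ∏ v ∈ A.image (fun i => dstar i - dstar k), v
        = ∏ i ∈ A, (dstar i - dstar k) := Finset.prod_image hinj
    have hcard : (A.image (fun i => dstar i - dstar k)).card = A.card :=
      Finset.card_image_of_injOn hinj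
    have habs : ∏ i ∈ A, |dstar k - dstar i| = ∏ i ∈ A, (dstar i - dstar k) := by
      refine Finset.prod_congr rfl fun i hi => ?_
      rw [abs_sub_comm]
      exact abs_of_pos (by have := hmem i hi; linarith)
    rw [habs, ← himg]
    refine sep_prod dmin hpos _ _ hcard ?_ ?_
    · intro v hv
      obtain ⟨i, hi, rfl⟩ := Finset.mem_image.mp hv
      have hik : i ≠ k := (Finset.mem_erase.mp (Finset.mem_filter.mp hi).1).1
      have := hlb i k hik
      rwa [abs_of_pos (by have := hmem i hi; linarith)] at this
    · intro v hv w hw hvw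
      obtain ⟨i, hi, rfl⟩ := Finset.mem_image.mp hv
      obtain ⟨j, hj, rfl⟩ := Finset.mem_image.mp hw
      have hij : i ≠ j := fun h => hvw (by rw [h])
      have := hlb i j hij
      have heq : dstar i - dstar k - (dstar j - dstar k) = dstar i - dstar j := by ring
      rwa [heq]
  have hcards : B.card + A.card = n - 1 := by
    have h1 : B.card + A.card = (Finset.univ.erase k).card :=
      Finset.card_filter_add_card_filter_not _
    rw [h1, Finset.card_erase_of_mem (Finset.mem_univ k), Finset.card_univ, Fintype.card_fin]
  have hzeta : paperZeta n ≤ (B.card.factorial : ℝ) * (A.card.factorial : ℝ) := by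
    rw [paperZeta_eq n hn]
    have := middle_factorial (n-1) B.card A.card hcards
    exact_mod_cast Nat.cast_le.mpr this
  calc paperZeta n * dmin ^ (n-1)
      ≤ ((B.card.factorial : ℝ) * (A.card.factorial : ℝ)) * dmin ^ (n-1) := by
        refine mul_le_mul_of_nonneg_right hzeta (by positivity)
    _ = ((B.card.factorial : ℝ) * dmin ^ B.card) * ((A.card.factorial : ℝ) * dmin ^ A.card) := by
        rw [← hcards, pow_add]; ring
    _ ≤ (∏ i ∈ B, |dstar k - dstar i|) * (∏ i ∈ A, |dstar k - dstar i|) := by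
        refine mul_le_mul hBprod hAprod (by positivity) ?_
        exact le_trans (by positivity) hBprod
    _ = _ := hsplit


lemma paperZeta_pos (n : ℕ) : 0 < paperZeta n := by
  unfold paperZeta
  split
  · have h1 : (0:ℝ) < (Nat.factorial (n/2) : ℝ) := Nat.cast_pos.mpr (Nat.factorial_pos _)
    have h2 : (0:ℝ) < (Nat.factorial ((n-2)/2) : ℝ) := Nat.cast_pos.mpr (Nat.factorial_pos _)
    positivity
  · have h1 : (0:ℝ) < (Nat.factorial ((n-1)/2) : ℝ) := Nat.cast_pos.mpr (Nat.factorial_pos _)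
    positivity

lemma coreD (n : ℕ) (hn : 2 ≤ n) (d : ℝ) (dstar : Fin n → ℝ)
    (hdist : Function.Injective dstar) (hin : ∀ j, -d ≤ dstar j ∧ dstar j ≤ d)
    (dmin : ℝ) (hpos : 0 < dmin)
    (hlb : ∀ i j : Fin n, i ≠ j → dmin ≤ |dstar i - dstar j|)
    (s : ℕ) (hs : 2 * n + 1 ≤ s) (c : Fin n → ℝ) :
    paperZeta n ^ 2 * (dmin ^ (n-1)) ^ 2 * ∑ k, c k ^ 2 ≤
      (n : ℝ) * ((1+d) ^ (n-1)) ^ 2 * ∑ i, ((vandD s n dstar).mulVec c i) ^ 2 := by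
  classical
  set Z := paperZeta n with hZ
  set P := dmin ^ (n-1) with hP
  set Q := (1+d) ^ (n-1) with hQdef
  have hZ0 : 0 < Z := paperZeta_pos n
  have hP0 : 0 < P := by positivity
  have hd0 : 0 ≤ d := by
    have := hin ⟨0, by omega⟩
    linarith [this.1, this.2]
  have hQ0 : 0 < Q := by positivity
  set R := Real.sqrt (∑ i, ((vandD s n dstar).mulVec c i) ^ 2) with hR
  have hsumnn : 0 ≤ ∑ i, ((vandD s n dstar).mulVec c i) ^ 2 :=
    Finset.sum_nonneg fun i _ => sq_nonneg _
  have hR0 : 0 ≤ R := Real.sqrt_nonneg _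
  have hR2 : R ^ 2 = ∑ i, ((vandD s n dstar).mulVec c i) ^ 2 := Real.sq_sqrt hsumnn
  -- embedding of Fin n into the row type
  have hsn : n < (s - 1) / 2 + 1 := by omega
  set emb : Fin n → Fin ((s - 1) / 2 + 1) := fun i => ⟨i.1, by omega⟩ with hemb
  have hbound_row : ∀ i : Fin ((s-1)/2+1), |(vandD s n dstar).mulVec c i| ≤ R := by
    intro i
    have h1 : ((vandD s n dstar).mulVec c i) ^ 2 ≤ ∑ i', ((vandD s n dstar).mulVec c i') ^ 2 :=
      Finset.single_le_sum (f := fun i' => ((vandD s n dstar).mulVec c i') ^ 2)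
        (fun i' _ => sq_nonneg _) (Finset.mem_univ i)
    calc |(vandD s n dstar).mulVec c i| = Real.sqrt (((vandD s n dstar).mulVec c i) ^ 2) :=
          (Real.sqrt_sq_eq_abs _).symm
      _ ≤ R := Real.sqrt_le_sqrt h1
  -- per-coordinate bound
  have perk : ∀ k : Fin n, |c k| * (Z * P) ≤ Q * R := by
    intro k
    set Pk : Polynomial ℝ := ∏ i ∈ Finset.univ.erase k, (X - C (dstar i)) with hPk
    have hcarde : (Finset.univ.erase k).card = n - 1 := by
      rw [Finset.card_erase_of_mem (Finset.mem_univ k), Finset.card_univ, Fintype.card_fin]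
    have hdegPk : Pk.natDegree < n := by
      have h1 : Pk.natDegree ≤ ∑ i ∈ Finset.univ.erase k, (X - C (dstar i)).natDegree :=
        Polynomial.natDegree_prod_le _ _
      simp only [natDegree_X_sub_C] at h1
      rw [Finset.sum_const, hcarde, smul_eq_mul, mul_one] at h1
      omega
    set Ek := Pk.eval (dstar k) with hEk
    have hEkabs : |Ek| = ∏ i ∈ Finset.univ.erase k, |dstar k - dstar i| := by
      rw [hEk, hPk, Polynomial.eval_prod, Finset.abs_prod]
      refine Finset.prod_congr rfl fun i _ => ?_
      simp
    have hEklb : Z * P ≤ |Ek| := by rw [hEkabs]; exact prod_gaps n hn dstar hdist dmin hpos hlb k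
    -- the key identity
    have hDval : ∀ i : Fin n, (vandD s n dstar).mulVec c (emb i)
        = ∑ j, dstar j ^ (i : ℕ) * c j := by
      intro i
      simp [vandD, Matrix.mulVec, dotProduct, hemb]
    have hkey : c k * Ek = ∑ i : Fin n, Pk.coeff i * (vandD s n dstar).mulVec c (emb i) := by
      have step1 : ∑ i : Fin n, Pk.coeff i * (vandD s n dstar).mulVec c (emb i)
          = ∑ i : Fin n, ∑ j, Pk.coeff i * (dstar j ^ (i : ℕ) * c j) := by
        refine Finset.sum_congr rfl fun i _ => ?_
        rw [hDval i, Finset.mul_sum]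
      rw [step1, Finset.sum_comm]
      have step2 : ∀ j : Fin n, ∑ i : Fin n, Pk.coeff i * (dstar j ^ (i : ℕ) * c j)
          = c j * Pk.eval (dstar j) := by
        intro j
        have : ∑ i : Fin n, Pk.coeff i * (dstar j ^ (i : ℕ) * c j)
            = (∑ i : Fin n, Pk.coeff i * dstar j ^ (i : ℕ)) * c j := by
          rw [Finset.sum_mul]; refine Finset.sum_congr rfl fun i _ => by ring
        rw [this, Fin.sum_univ_eq_sum_range (fun i => Pk.coeff i * dstar j ^ i) n,
          ← Polynomial.eval_eq_sum_range' hdegPk]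
        ring
      rw [Finset.sum_congr rfl fun j _ => step2 j]
      rw [Finset.sum_eq_single k]
      · intro j _ hjk
        have : Pk.eval (dstar j) = 0 := by
          rw [hPk, Polynomial.eval_prod]
          refine Finset.prod_eq_zero (Finset.mem_erase.mpr ⟨hjk, Finset.mem_univ j⟩) ?_
          simp
        rw [this, mul_zero]
      · intro h; exact absurd (Finset.mem_univ k) h
    have hcoeffsum : ∑ i : Fin n, |Pk.coeff i| ≤ Q := by
      have h1 : ∑ i : Fin n, |Pk.coeff (i : ℕ)| = ∑ i ∈ Finset.range n, |Pk.coeff i| :=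
        Fin.sum_univ_eq_sum_range (fun i => |Pk.coeff i|) n
      have h2 : (Finset.univ.erase k).card + 1 = n := by omega
      have h3 := abs_coeff_sum dstar (Finset.univ.erase k)
      rw [h2] at h3
      have h4 : ∏ i ∈ Finset.univ.erase k, (1 + |dstar i|) ≤ ∏ _i ∈ Finset.univ.erase k, (1+d) := by
        refine Finset.prod_le_prod (fun i _ => by positivity) fun i _ => ?_
        have := abs_le.mpr ⟨(hin i).1, (hin i).2⟩
        linarith
      rw [Finset.prod_const, hcarde] at h4
      rw [h1]
      exact le_trans (le_trans h3 h4) (le_of_eq rfl)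
    have habs : |c k * Ek| ≤ Q * R := by
      rw [hkey]
      calc |∑ i : Fin n, Pk.coeff i * (vandD s n dstar).mulVec c (emb i)|
          ≤ ∑ i : Fin n, |Pk.coeff i * (vandD s n dstar).mulVec c (emb i)| :=
            Finset.abs_sum_le_sum_abs _ _
        _ ≤ ∑ i : Fin n, |Pk.coeff i| * R := by
            refine Finset.sum_le_sum fun i _ => ?_
            rw [abs_mul]
            exact mul_le_mul_of_nonneg_left (hbound_row (emb i)) (abs_nonneg _)
        _ = (∑ i : Fin n, |Pk.coeff i|) * R := by rw [Finset.sum_mul]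
        _ ≤ Q * R := mul_le_mul_of_nonneg_right hcoeffsum hR0
    calc |c k| * (Z * P) ≤ |c k| * |Ek| := mul_le_mul_of_nonneg_left hEklb (abs_nonneg _)
      _ = |c k * Ek| := (abs_mul _ _).symm
      _ ≤ Q * R := habs
  -- square and sum
  have persq : ∀ k : Fin n, c k ^ 2 * (Z * P) ^ 2 ≤ Q ^ 2 * R ^ 2 := by
    intro k
    have h := perk k
    have h0 : 0 ≤ |c k| * (Z * P) := by positivity
    nlinarith [sq_abs (c k)]
  have hsum : ∑ k, c k ^ 2 * (Z * P) ^ 2 ≤ ∑ _k : Fin n, Q ^ 2 * R ^ 2 :=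
    Finset.sum_le_sum fun k _ => persq k
  rw [Finset.sum_const, Finset.card_univ, Fintype.card_fin, nsmul_eq_mul] at hsum
  rw [← Finset.sum_mul] at hsum
  rw [hR2] at hsum
  calc Z ^ 2 * P ^ 2 * ∑ k, c k ^ 2 = (∑ k, c k ^ 2) * (Z * P) ^ 2 := by ring
    _ ≤ (n : ℝ) * (Q ^ 2 * ∑ i, ((vandD s n dstar).mulVec c i) ^ 2) := hsum
    _ = (n : ℝ) * Q ^ 2 * ∑ i, ((vandD s n dstar).mulVec c i) ^ 2 := by ring


end

set_option maxHeartbeats 1000000 in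
/-- The `n`-th largest singular value of `D·A·Dᵀ` (its smallest nonzero singular value,
characterized as the minimum of `‖D·A·Dᵀ·x‖₂` over Euclidean unit vectors `x` orthogonal to
the kernel of `D·A·Dᵀ`) is at least `m·ζ(n)²·(d*_min)^(2n−2)/(n·(1+d)^(2n−2))`. -/
theorem stmt_19 (n : ℕ) (hn : 2 ≤ n) (d : ℝ) (dstar : Fin n → ℝ)
    (hdist : Function.Injective dstar) (hin : ∀ j, -d ≤ dstar j ∧ dstar j ≤ d) (dmin : ℝ)
    (hdmin : IsLeast {x : ℝ | ∃ i j : Fin n, i ≠ j ∧ x = |dstar i - dstar j|} dmin)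
    (m : ℝ) (hm : 0 < m) (astar : Fin n → ℝ) (ha : ∀ j, m ≤ |astar j|)
    (s : ℕ) (hodd : Odd s) (hs : 2 * n + 1 ≤ s)
    (x : Fin ((s - 1) / 2 + 1) → ℝ)
    (hker : ∀ y : Fin ((s - 1) / 2 + 1) → ℝ,
      (vandD s n dstar * Matrix.diagonal astar * (vandD s n dstar)ᵀ).mulVec y = 0 →
        ∑ i, x i * y i = 0)
    (hunit : ∑ i, (x i) ^ 2 = 1) :
    Real.sqrt (∑ i,
        ((vandD s n dstar * Matrix.diagonal astar * (vandD s n dstar)ᵀ).mulVec x i) ^ 2) ≥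
      m * paperZeta n ^ 2 * dmin ^ (2 * n - 2) / (n * (1 + d) ^ (2 * n - 2)) := by
  classical
  set DM := vandD s n dstar with hDM
  set AM := Matrix.diagonal astar with hAM
  -- basic positivity facts
  obtain ⟨⟨i0, j0, hne0, heq0⟩, hlbset⟩ := hdmin
  have hlb : ∀ i j : Fin n, i ≠ j → dmin ≤ |dstar i - dstar j| := fun i j h =>
    hlbset ⟨i, j, h, rfl⟩
  have hposd : 0 < dmin := by
    rw [heq0]
    have : dstar i0 ≠ dstar j0 := fun h => hne0 (hdist h)
    exact abs_pos.mpr (sub_ne_zero.mpr this)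
  have hd0 : 0 ≤ d := by have := hin ⟨0, by omega⟩; linarith [this.1, this.2]
  set Z := paperZeta n with hZdef
  set P := dmin ^ (n-1) with hPdef
  set Q := (1+d) ^ (n-1) with hQdef
  have hZ0 : 0 < Z := paperZeta_pos n
  have hP0 : 0 < P := by positivity
  have hQ0 : 0 < Q := by positivity
  set α := Z ^ 2 * P ^ 2 with hαdef
  set ν := (n : ℝ) * Q ^ 2 with hνdef
  have hα0 : 0 < α := by positivity
  have hν0 : 0 < ν := by
    have : (0:ℝ) < (n:ℝ) := by positivity -- n ≥ 2
    positivity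
  have core : ∀ c : Fin n → ℝ,
      α * ∑ k, c k ^ 2 ≤ ν * ∑ i, (DM.mulVec c i) ^ 2 := by
    intro c
    have := coreD n hn d dstar hdist hin dmin hposd hlb s hs c
    calc α * ∑ k, c k ^ 2 = Z ^ 2 * P ^ 2 * ∑ k, c k ^ 2 := by rw [hαdef]
      _ ≤ (n:ℝ) * Q ^ 2 * ∑ i, (DM.mulVec c i) ^ 2 := this
      _ = ν * ∑ i, (DM.mulVec c i) ^ 2 := by rw [hνdef]
  -- G = DMᵀ * DM is injective
  have hGquad : ∀ c : Fin n → ℝ, c ⬝ᵥ (DMᵀ * DM).mulVec c = ∑ i, (DM.mulVec c i) ^ 2 := by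
    intro c
    rw [← Matrix.mulVec_mulVec, Matrix.dotProduct_mulVec, Matrix.vecMul_transpose]
    simp [dotProduct, sq]
  have hker0 : ∀ c : Fin n → ℝ, (DMᵀ * DM).mulVec c = 0 → c = 0 := by
    intro c hc
    have h1 : ∑ i, (DM.mulVec c i) ^ 2 = 0 := by
      rw [← hGquad c, hc]; simp [dotProduct]
    have h2 := core c
    rw [h1, mul_zero] at h2
    have h3 : ∑ k, c k ^ 2 = 0 := by
      have hnn : 0 ≤ ∑ k, c k ^ 2 := Finset.sum_nonneg fun k _ => sq_nonneg _
      nlinarith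
    funext k
    have := (Finset.sum_eq_zero_iff_of_nonneg (fun k _ => sq_nonneg (c k))).mp h3 k
      (Finset.mem_univ k)
    exact pow_eq_zero_iff (by norm_num) |>.mp this
  have hGinj : Function.Injective ((DMᵀ * DM).mulVecLin) := by
    intro a b hab
    have h := hker0 (a - b) (by
      rw [Matrix.mulVec_sub]
      rw [show (DMᵀ * DM).mulVec a = (DMᵀ * DM).mulVecLin a from rfl,
        show (DMᵀ * DM).mulVec b = (DMᵀ * DM).mulVecLin b from rfl, hab]
      simp)
    exact sub_eq_zero.mp h
  have hGsurj := (LinearMap.injective_iff_surjective).mp hGinj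
  obtain ⟨c, hc⟩ := hGsurj (DMᵀ.mulVec x)
  rw [Matrix.mulVecLin_apply] at hc
  -- x = DM *ᵥ c
  set r := x - DM.mulVec c with hr
  have hDtr : DMᵀ.mulVec r = 0 := by
    rw [hr, Matrix.mulVec_sub, Matrix.mulVec_mulVec, hc, sub_self]
  have hMr : (DM * AM * DMᵀ).mulVec r = 0 := by
    rw [← Matrix.mulVec_mulVec, hDtr, Matrix.mulVec_zero]
  have hxr : ∑ i, x i * r i = 0 := hker r hMr
  have hDcr : ∑ i, DM.mulVec c i * r i = 0 := by
    have h1 : c ⬝ᵥ (DMᵀ.mulVec r) = (DM.mulVec c) ⬝ᵥ r := by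
      rw [Matrix.dotProduct_mulVec, Matrix.vecMul_transpose]
    rw [hDtr] at h1
    simp [dotProduct] at h1
    simpa [dotProduct] using h1.symm
  have hr0 : r = 0 := by
    have hsq : ∑ i, r i ^ 2 = 0 := by
      have : ∀ i, r i ^ 2 = x i * r i - DM.mulVec c i * r i := by
        intro i; rw [hr]; simp [sq]; ring
      rw [Finset.sum_congr rfl fun i _ => this i, Finset.sum_sub_distrib, hxr, hDcr, sub_zero]
    funext i
    have := (Finset.sum_eq_zero_iff_of_nonneg (fun i _ => sq_nonneg (r i))).mp hsq i
      (Finset.mem_univ i)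
    simpa using pow_eq_zero_iff (two_ne_zero) |>.mp this
  have hx : x = DM.mulVec c := by
    have := hr0; rw [hr] at this; exact sub_eq_zero.mp this
  -- quantities
  set u := DMᵀ.mulVec x with hu
  set t := ∑ j, u j ^ 2 with ht
  have ht0 : 0 ≤ t := Finset.sum_nonneg fun j _ => sq_nonneg _
  have hinner : ∑ j, u j * c j = 1 := by
    have h1 : x ⬝ᵥ (DM.mulVec c) = (DMᵀ.mulVec x) ⬝ᵥ c := by
      rw [Matrix.dotProduct_mulVec]
      congr 1
      rw [← Matrix.vecMul_transpose, Matrix.transpose_transpose]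
    rw [← hx] at h1
    have h2 : x ⬝ᵥ x = 1 := by simpa [dotProduct, sq] using hunit
    rw [h2] at h1
    simpa [dotProduct, hu] using h1.symm
  have hCS : 1 ≤ t * ∑ k, c k ^ 2 := by
    have := Finset.sum_mul_sq_le_sq_mul_sq Finset.univ u c
    rw [hinner] at this
    simpa [ht] using this
  have hc2 : α * ∑ k, c k ^ 2 ≤ ν := by
    have h1 := core c
    have h2 : ∑ i, (DM.mulVec c i) ^ 2 = 1 := by rw [← hx]; exact hunit
    rw [h2, mul_one] at h1
    exact h1
  -- w = AM *ᵥ u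
  set w := AM.mulVec u with hw
  have hwj : ∀ j, w j = astar j * u j := fun j => Matrix.mulVec_diagonal _ _ _
  have hw2 : m ^ 2 * t ≤ ∑ j, w j ^ 2 := by
    rw [ht, Finset.mul_sum]
    refine Finset.sum_le_sum fun j _ => ?_
    rw [hwj j, mul_pow]
    have h1 : m ^ 2 ≤ astar j ^ 2 := by
      have := ha j
      nlinarith [sq_abs (astar j), abs_nonneg (astar j)]
    nlinarith [sq_nonneg (u j)]
  have hMx : (DM * AM * DMᵀ).mulVec x = DM.mulVec w := by
    rw [← Matrix.mulVec_mulVec, ← Matrix.mulVec_mulVec]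
  set W := ∑ i, ((DM * AM * DMᵀ).mulVec x i) ^ 2 with hW
  have hW0 : 0 ≤ W := Finset.sum_nonneg fun i _ => sq_nonneg _
  have hsum_eq : W = ∑ i, (DM.mulVec w i) ^ 2 := by
    rw [hW]
    refine Finset.sum_congr rfl fun i _ => ?_
    rw [hMx]
  have hcore_w : α * ∑ j, w j ^ 2 ≤ ν * W := by
    rw [hsum_eq]
    exact core w
  -- numeric combination
  have hcc0 : 0 ≤ ∑ k, c k ^ 2 := Finset.sum_nonneg fun k _ => sq_nonneg _
  have hαt : α ≤ ν * t := by nlinarith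
  have hkey : α ^ 2 * m ^ 2 ≤ ν ^ 2 * W := by
    have s1 : α * (m ^ 2 * t) ≤ α * ∑ j, w j ^ 2 := mul_le_mul_of_nonneg_left hw2 hα0.le
    have s2 : ν * (α * ∑ j, w j ^ 2) ≤ ν * (ν * W) := mul_le_mul_of_nonneg_left hcore_w hν0.le
    have s3 : ν * (α * (m ^ 2 * t)) ≤ ν * (α * ∑ j, w j ^ 2) := mul_le_mul_of_nonneg_left s1 hν0.le
    have s4 : α * (α * m ^ 2) ≤ (ν * t) * (α * m ^ 2) :=
      mul_le_mul_of_nonneg_right hαt (by positivity)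
    nlinarith [s2, s3, s4]
  -- conclude
  have hgoal : m * Z ^ 2 * dmin ^ (2 * n - 2) / ((n:ℝ) * (1 + d) ^ (2 * n - 2)) = m * α / ν := by
    rw [hαdef, hνdef, hPdef, hQdef, ← pow_mul, ← pow_mul]
    have h1 : (n - 1) * 2 = 2 * n - 2 := by omega
    rw [h1]
    ring
  rw [ge_iff_le, hgoal]
  have hrhs0 : 0 ≤ m * α / ν := by positivity
  rw [Real.le_sqrt hrhs0 hW0]
  rw [div_pow, div_le_iff₀ (by positivity)]
  calc (m * α) ^ 2 = α ^ 2 * m ^ 2 := by ring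
    _ ≤ ν ^ 2 * W := hkey
    _ = W * ν ^ 2 := by ring
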